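/- Let (X, μ) be a measure space endowed with a measure-preserving action of a countable group G. Then two measurable sets A, B ⊆ X are G-equidecomposable up to measure zero (with possibly non-measurable pieces) if and only if A and B satisfy Hall's condition almost everywhere with respect to G. -/

import Mathlib

open Pointwise MeasureTheory

section EgdcmpAux

open Function


lemma egdcmp_csb {α β : Type*} {f : α → β} {g : β → α}
    (hf : Injective f) (hg : Injective g) :
    ∃ h : α → β, Bijective h ∧ ∀ a, h a = f a ∨ g (h a) = a := by
  classical
  set T : Set α →o Set α :=
    ⟨fun s => (g '' (f '' s)ᶜ)ᶜ, by
      intro s t hst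
      exact Set.compl_subset_compl.2
        (Set.image_mono (Set.compl_subset_compl.2 (Set.image_mono hst)))⟩ with hT
  set S : Set α := OrderHom.lfp T with hS
  have hfix : (g '' (f '' S)ᶜ)ᶜ = S := OrderHom.map_lfp T
  have hmem : ∀ a, a ∉ S → ∃ b, b ∉ f '' S ∧ g b = a := by
    intro a ha
    have : a ∈ g '' (f '' S)ᶜ := by
      by_contra hcon
      exact ha (hfix ▸ hcon)
    obtain ⟨b, hb, hgb⟩ := this
    exact ⟨b, hb, hgb⟩
  choose bfn hb1 hb2 using hmem
  let H : α → β := fun a => if ha : a ∈ S then f a else bfn a ha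
  have hHin : ∀ a (ha : a ∈ S), H a = f a := fun a ha => dif_pos ha
  have hHout : ∀ a (ha : a ∉ S), H a = bfn a ha := fun a ha => dif_neg ha
  refine ⟨H, ⟨?_, ?_⟩, ?_⟩
  · intro a1 a2 h12
    by_cases h1 : a1 ∈ S <;> by_cases h2 : a2 ∈ S
    · rw [hHin a1 h1, hHin a2 h2] at h12; exact hf h12
    · rw [hHin a1 h1, hHout a2 h2] at h12
      exact absurd (h12 ▸ ⟨a1, h1, rfl⟩) (hb1 a2 h2)
    · rw [hHout a1 h1, hHin a2 h2] at h12
      exact absurd (h12 ▸ ⟨a2, h2, rfl⟩) (hb1 a1 h1)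
    · rw [hHout a1 h1, hHout a2 h2] at h12
      rw [← hb2 a1 h1, ← hb2 a2 h2, h12]
  · intro b0
    by_cases hb0 : b0 ∈ f '' S
    · obtain ⟨a, ha, hfa⟩ := hb0
      exact ⟨a, by rw [hHin a ha]; exact hfa⟩
    · have hgb0 : g b0 ∉ S := by
        intro hcon
        rw [← hfix] at hcon
        exact hcon ⟨b0, hb0, rfl⟩
      refine ⟨g b0, ?_⟩
      rw [hHout (g b0) hgb0]
      exact hg (hb2 (g b0) hgb0)
  · intro a
    by_cases ha : a ∈ S
    · exact Or.inl (hHin a ha)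
    · exact Or.inr (by rw [hHout a ha]; exact hb2 a ha)

variable {X G : Type*} [Group G] [MulAction G X] [MeasurableSpace X]

set_option linter.unusedSectionVars false
variable {X G : Type*} [Group G] [MulAction G X] [MeasurableSpace X]

lemma egdcmp_smul_set_null (μ : Measure X) (hmp : ∀ g : G, MeasurePreserving (fun x : X => g • x) μ μ)
    {N : Set X} (hN : μ N = 0) (g : G) : μ (g • N) = 0 := by
  have h1 : g • N = (fun x : X => g⁻¹ • x) ⁻¹' N := by
    ext x
    simp [Set.mem_smul_set_iff_inv_smul_mem]
  have h2 := MeasureTheory.Measure.le_map_apply (μ := μ) ((hmp g⁻¹).measurable.aemeasurable) N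
  rw [(hmp g⁻¹).map_eq] at h2
  rw [h1]
  exact le_antisymm (h2.trans (le_of_eq hN)) zero_le

lemma egdcmp_core_subset (X' : Set X) : (⋂ g : G, g • X') ⊆ X' := by
  intro x hx
  have := Set.mem_iInter.1 hx 1
  rwa [one_smul] at this

lemma egdcmp_core_inv (X' : Set X) (g : G) {x : X} (hx : x ∈ ⋂ g : G, g • X') :
    g • x ∈ ⋂ g : G, g • X' := by
  rw [Set.mem_iInter]
  intro h
  rw [Set.mem_smul_set_iff_inv_smul_mem, ← mul_smul]
  have := Set.mem_iInter.1 hx (g⁻¹ * h)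
  rw [Set.mem_smul_set_iff_inv_smul_mem, mul_inv_rev, inv_inv] at this
  exact this

lemma egdcmp_core_orbit {X' : Set X} {x : X} (hx : x ∈ ⋂ g : G, g • X') :
    MulAction.orbit G x ⊆ ⋂ g : G, g • X' := by
  rintro y ⟨g, rfl⟩
  exact egdcmp_core_inv X' g hx

lemma egdcmp_core_null [Countable G] (μ : Measure X)
    (hmp : ∀ g : G, MeasurePreserving (fun x : X => g • x) μ μ)
    {X' : Set X} (hX' : μ X'ᶜ = 0) : μ (⋂ g : G, g • X')ᶜ = 0 := by
  rw [Set.compl_iInter]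
  refine measure_iUnion_null fun g => ?_
  rw [← Set.smul_set_compl]
  exact egdcmp_smul_set_null μ hmp hX' g

lemma egdcmp_global_hall {F' : Set G} (hF' : F'.Finite) {A B C : Set X}
    (hloc : ∀ x ∈ C, ∀ S : Finset X, ↑S ⊆ A ∩ MulAction.orbit G x →
      S.card ≤ ((F' • (S : Set X)) ∩ B).ncard) :
    ∀ S : Finset X, ↑S ⊆ A ∩ C → S.card ≤ ((F' • (S : Set X)) ∩ B).ncard := by
  classical
  intro S hS
  have hTfin : ((F' • (S : Set X)) ∩ B).Finite := (hF'.smul S.finite_toSet).inter_of_left _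
  set T : Finset X := hTfin.toFinset with hTdef
  rw [Set.ncard_eq_toFinset_card _ hTfin]
  set q : X → Quotient (MulAction.orbitRel G X) := Quotient.mk _ with hq
  set Qf : Finset (Quotient (MulAction.orbitRel G X)) := S.image q with hQf
  have horbq : ∀ (g : G) (s : X), q (g • s) = q s := by
    intro g s
    exact Quotient.sound (MulAction.mem_orbit s g)
  have hcard1 : S.card = ∑ b ∈ Qf, (S.filter (fun a => q a = b)).card :=
    Finset.card_eq_sum_card_fiberwise fun x hx => Finset.mem_image_of_mem q hx
  have hcard2 : T.card = ∑ b ∈ Qf, (T.filter (fun a => q a = b)).card := by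
    refine Finset.card_eq_sum_card_fiberwise fun y hy => ?_
    rw [hTdef, Finset.mem_coe, Set.Finite.mem_toFinset] at hy
    obtain ⟨⟨g, hg, s, hs, rfl⟩, _⟩ := hy
    rw [horbq]
    exact Finset.mem_image_of_mem q hs
  rw [hcard1, hcard2]
  refine Finset.sum_le_sum fun b hb => ?_
  set Sb : Finset X := S.filter (fun a => q a = b) with hSb
  rcases Sb.eq_empty_or_nonempty with he | ⟨x0, hx0⟩
  · simp [← hSb, he]
  · have hx0S : x0 ∈ S := (Finset.mem_filter.1 hx0).1
    have hx0q : q x0 = b := (Finset.mem_filter.1 hx0).2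
    have hx0C : x0 ∈ C := (hS hx0S).2
    have hSbsub : ↑Sb ⊆ A ∩ MulAction.orbit G x0 := by
      intro s hs
      rcases Finset.mem_filter.1 hs with ⟨hsS, hsq⟩
      refine ⟨(hS hsS).1, ?_⟩
      have : q s = q x0 := by rw [hsq, hx0q]
      exact Quotient.exact this
    refine (hloc x0 hx0C Sb hSbsub).trans ?_
    have hsub : (F' • (Sb : Set X)) ∩ B ⊆ ↑(T.filter (fun a => q a = b)) := by
      rintro y ⟨⟨g, hg, s, hs, rfl⟩, hyB⟩
      have hsSb : s ∈ Sb := hs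
      rcases Finset.mem_filter.1 hsSb with ⟨hsS, hsq⟩
      refine Finset.mem_coe.2 (Finset.mem_filter.2 ⟨?_, ?_⟩)
      · rw [hTdef, Set.Finite.mem_toFinset]
        exact ⟨⟨g, hg, s, hsS, rfl⟩, hyB⟩
      · rw [horbq, hsq]
    calc ((F' • (Sb : Set X)) ∩ B).ncard
        ≤ (↑(T.filter (fun a => q a = b)) : Set X).ncard :=
          Set.ncard_le_ncard hsub (T.filter _).finite_toSet
      _ = (T.filter (fun a => q a = b)).card := Set.ncard_coe_finset _

end EgdcmpAux

/-- `P` is a partition of `A` into finitely many (possibly empty) pieces. -/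
def IsPartitionOf {X : Type*} {n : ℕ} (P : Fin n → Set X) (A : Set X) : Prop :=
  (⋃ i, P i) = A ∧ Pairwise (Function.onFun Disjoint P)

/-- `A` and `B` are `G`-equidecomposable up to measure zero (with possibly
non-measurable pieces). -/
def EquidecompUpToNull {X G : Type*} [Group G] [MulAction G X] [MeasurableSpace X]
    (μ : Measure X) (A B : Set X) : Prop :=
  ∃ (n : ℕ) (P : Fin n → Set X) (g : Fin n → G) (X' : Set X),
    μ X'ᶜ = 0 ∧
    IsPartitionOf (fun i => P i ∩ X') (A ∩ X') ∧
    IsPartitionOf (fun i => (g i • P i) ∩ X') (B ∩ X')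

/-- `A` and `B` satisfy Hall's condition a.e. with respect to `G`: there are a finite
`F ⊆ G` and a full measure set `X'` such that for every `x ∈ X'`, Hall's condition holds
for `A ∩ (G · x)` and `B ∩ (G · x)` with the set `F`. -/
def HallConditionAE {X G : Type*} [Group G] [MulAction G X] [MeasurableSpace X]
    (μ : Measure X) (A B : Set X) : Prop :=
  ∃ (F : Finset G) (X' : Set X), μ X'ᶜ = 0 ∧ ∀ x ∈ X',
    (∀ S : Finset X, ↑S ⊆ A ∩ MulAction.orbit G x →
      S.card ≤ (((F : Set G) • (S : Set X)) ∩ B).ncard) ∧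
    (∀ T : Finset X, ↑T ⊆ B ∩ MulAction.orbit G x →
      T.card ≤ (((F : Set G)⁻¹ • (T : Set X)) ∩ A).ncard)

/-- For a measure space `(X, μ)` with a measure-preserving action of a countable group `G`,
two measurable sets `A, B ⊆ X` are `G`-equidecomposable up to measure zero iff they satisfy
Hall's condition a.e. with respect to `G`. -/
theorem equidecompUpToNull_iff_hallAE {X G : Type*} [Group G] [Countable G] [MulAction G X]
    [MeasurableSpace X] (μ : Measure X)
    (hmp : ∀ g : G, MeasurePreserving (fun x : X => g • x) μ μ)
    (A B : Set X) (hA : MeasurableSet A) (hB : MeasurableSet B) :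
    EquidecompUpToNull (G := G) μ A B ↔ HallConditionAE (G := G) μ A B := by
  constructor
  · intro hE
    unfold EquidecompUpToNull IsPartitionOf at hE
    unfold HallConditionAE
    obtain ⟨n, P, gv, X', hX', ⟨hAu, hAd⟩, ⟨hBu, hBd⟩⟩ := hE
    classical
    set C : Set X := ⋂ g : G, g • X' with hCdef
    have hCsub : C ⊆ X' := egdcmp_core_subset X'
    refine ⟨Finset.univ.image gv, C, egdcmp_core_null μ hmp hX', ?_⟩
    -- choice of pieces
    have hexA : ∀ y, y ∈ A ∩ C → ∃ i, y ∈ P i ∩ X' := by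
      intro y hy
      have : y ∈ A ∩ X' := ⟨hy.1, hCsub hy.2⟩
      rw [← hAu] at this
      exact Set.mem_iUnion.1 this
    choose idxA hidxA using hexA
    have hexB : ∀ y, y ∈ B ∩ C → ∃ j, y ∈ (gv j • P j) ∩ X' := by
      intro y hy
      have : y ∈ B ∩ X' := ⟨hy.1, hCsub hy.2⟩
      rw [← hBu] at this
      exact Set.mem_iUnion.1 this
    choose idxB hidxB using hexB
    let φ : X → X := fun y => if hy : y ∈ A ∩ C then gv (idxA y hy) • y else y
    have hφ : ∀ y (hy : y ∈ A ∩ C), φ y = gv (idxA y hy) • y := fun y hy => dif_pos hy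
    have hφpiece : ∀ y (hy : y ∈ A ∩ C), φ y ∈ (gv (idxA y hy) • P (idxA y hy)) ∩ X' := by
      intro y hy
      rw [hφ y hy]
      exact ⟨Set.smul_mem_smul_set (hidxA y hy).1, hCsub (egdcmp_core_inv X' _ hy.2)⟩
    have hφB : ∀ y (hy : y ∈ A ∩ C), φ y ∈ B ∩ C := by
      intro y hy
      have h1 : φ y ∈ B ∩ X' := by
        rw [← hBu]
        exact Set.mem_iUnion.2 ⟨idxA y hy, hφpiece y hy⟩
      refine ⟨h1.1, ?_⟩
      rw [hφ y hy]
      exact egdcmp_core_inv X' _ hy.2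
    have hφinj : Set.InjOn φ (A ∩ C) := by
      intro y1 h1 y2 h2 heq
      by_cases hij : idxA y1 h1 = idxA y2 h2
      · have e1 := hφ y1 h1
        have e2 := hφ y2 h2
        rw [e1, e2, hij] at heq
        exact smul_left_cancel _ heq
      · exfalso
        have m1 := hφpiece y1 h1
        have m2 := hφpiece y2 h2
        rw [heq] at m1
        exact Set.disjoint_left.1 (hBd hij) m1 m2
    let ψ : X → X := fun y => if hy : y ∈ B ∩ C then (gv (idxB y hy))⁻¹ • y else y
    have hψ : ∀ y (hy : y ∈ B ∩ C), ψ y = (gv (idxB y hy))⁻¹ • y := fun y hy => dif_pos hy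
    have hψpiece : ∀ y (hy : y ∈ B ∩ C), ψ y ∈ P (idxB y hy) ∩ X' := by
      intro y hy
      rw [hψ y hy]
      constructor
      · exact Set.mem_smul_set_iff_inv_smul_mem.1 (hidxB y hy).1
      · exact hCsub (egdcmp_core_inv X' _ hy.2)
    have hψA : ∀ y (hy : y ∈ B ∩ C), ψ y ∈ A ∩ C := by
      intro y hy
      have h1 : ψ y ∈ A ∩ X' := by
        rw [← hAu]
        exact Set.mem_iUnion.2 ⟨idxB y hy, hψpiece y hy⟩
      refine ⟨h1.1, ?_⟩
      rw [hψ y hy]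
      exact egdcmp_core_inv X' _ hy.2
    have hψinj : Set.InjOn ψ (B ∩ C) := by
      intro y1 h1 y2 h2 heq
      by_cases hij : idxB y1 h1 = idxB y2 h2
      · have e1 := hψ y1 h1
        have e2 := hψ y2 h2
        rw [e1, e2, hij] at heq
        exact smul_left_cancel _ heq
      · exfalso
        have m1 := hψpiece y1 h1
        have m2 := hψpiece y2 h2
        rw [heq] at m1
        exact Set.disjoint_left.1 (hAd hij) m1 m2
    intro x hxC
    constructor
    · intro S hSsub
      have hSsub' : (S : Set X) ⊆ A ∩ C := fun s hs =>
        ⟨(hSsub hs).1, egdcmp_core_orbit hxC (hSsub hs).2⟩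
      have himg : φ '' ↑S ⊆ ((↑(Finset.univ.image gv) : Set G) • (S : Set X)) ∩ B := by
        rintro _ ⟨s, hs, rfl⟩
        have hy := hSsub' hs
        refine ⟨?_, (hφB s hy).1⟩
        rw [hφ s hy]
        exact Set.mem_smul.2 ⟨gv (idxA s hy), by simp, s, hs, rfl⟩
      have hfin : (((↑(Finset.univ.image gv) : Set G) • (S : Set X)) ∩ B).Finite :=
        ((Finset.univ.image gv).finite_toSet.smul S.finite_toSet).inter_of_left _
      calc S.card = (S : Set X).ncard := (Set.ncard_coe_finset S).symm
        _ = (φ '' ↑S).ncard := (Set.ncard_image_of_injOn (hφinj.mono hSsub')).symm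
        _ ≤ _ := Set.ncard_le_ncard himg hfin
    · intro T hTsub
      have hTsub' : (T : Set X) ⊆ B ∩ C := fun s hs =>
        ⟨(hTsub hs).1, egdcmp_core_orbit hxC (hTsub hs).2⟩
      have himg : ψ '' ↑T ⊆ ((↑(Finset.univ.image gv) : Set G)⁻¹ • (T : Set X)) ∩ A := by
        rintro _ ⟨s, hs, rfl⟩
        have hy := hTsub' hs
        refine ⟨?_, (hψA s hy).1⟩
        rw [hψ s hy]
        refine Set.mem_smul.2 ⟨(gv (idxB s hy))⁻¹, ?_, s, hs, rfl⟩
        rw [Set.mem_inv, inv_inv]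
        simp
      have hfin : (((↑(Finset.univ.image gv) : Set G)⁻¹ • (T : Set X)) ∩ A).Finite :=
        (((Finset.univ.image gv).finite_toSet.inv).smul T.finite_toSet).inter_of_left _
      calc T.card = (T : Set X).ncard := (Set.ncard_coe_finset T).symm
        _ = (ψ '' ↑T).ncard := (Set.ncard_image_of_injOn (hψinj.mono hTsub')).symm
        _ ≤ _ := Set.ncard_le_ncard himg hfin
  · intro hH
    unfold HallConditionAE at hH
    unfold EquidecompUpToNull IsPartitionOf
    obtain ⟨F, X', hX', hHall⟩ := hH
    classical
    set C : Set X := ⋂ g : G, g • X' with hCdef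
    have hCsub : C ⊆ X' := egdcmp_core_subset X'
    have hGA := egdcmp_global_hall (F.finite_toSet) (A := A) (B := B) (C := C)
      (fun x hx => (hHall x (hCsub hx)).1)
    have hGB := egdcmp_global_hall (F.finite_toSet.inv) (A := B) (B := A) (C := C)
      (fun x hx => (hHall x (hCsub hx)).2)
    -- Hall's theorem, A side
    have key : ∀ (A₀ B₀ : Set X) (F₀ : Set G), F₀.Finite →
        (∀ g : G, ∀ x ∈ C, g • x ∈ C) →
        (∀ S : Finset X, ↑S ⊆ A₀ ∩ C → S.card ≤ ((F₀ • (S : Set X)) ∩ B₀).ncard) →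
        ∃ f0 : {x // x ∈ A₀ ∩ C} → X, Function.Injective f0 ∧
          ∀ a : {x // x ∈ A₀ ∩ C}, ∃ g ∈ F₀, g • (a : X) = f0 a ∧ f0 a ∈ B₀ := by
      intro A₀ B₀ F₀ hF₀ hCinv hG
      have htfin : ∀ a : {x // x ∈ A₀ ∩ C}, ((F₀ • ({(a : X)} : Set X)) ∩ B₀).Finite :=
        fun a => (hF₀.smul (Set.finite_singleton _)).inter_of_left _
      set t : {x // x ∈ A₀ ∩ C} → Finset X := fun a => (htfin a).toFinset with ht
      have hHallA : ∀ s : Finset {x // x ∈ A₀ ∩ C}, s.card ≤ (s.biUnion t).card := by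
        intro s
        set S : Finset X := s.image Subtype.val with hSdef
        have hcard : S.card = s.card := Finset.card_image_of_injective s Subtype.val_injective
        have hSsub : (S : Set X) ⊆ A₀ ∩ C := by
          intro y hy
          obtain ⟨a, _, rfl⟩ := Finset.mem_image.1 (Finset.mem_coe.1 hy)
          exact a.2
        have heq : (F₀ • (S : Set X)) ∩ B₀ = ↑(s.biUnion t) := by
          ext y
          constructor
          · rintro ⟨⟨g, hg, x, hx, rfl⟩, hyB⟩
            obtain ⟨a, haS, rfl⟩ := Finset.mem_image.1 (Finset.mem_coe.1 hx)
            refine Finset.mem_coe.2 (Finset.mem_biUnion.2 ⟨a, haS, ?_⟩)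
            rw [Set.Finite.mem_toFinset]
            exact ⟨⟨g, hg, (a : X), rfl, rfl⟩, hyB⟩
          · intro hy
            obtain ⟨a, has, hyt⟩ := Finset.mem_biUnion.1 (Finset.mem_coe.1 hy)
            rw [Set.Finite.mem_toFinset] at hyt
            obtain ⟨⟨g, hg, x, hx, rfl⟩, hyB⟩ := hyt
            rcases hx with rfl
            exact ⟨⟨g, hg, (a : X), Finset.mem_coe.2 (Finset.mem_image_of_mem _ has), rfl⟩, hyB⟩
        calc s.card = S.card := hcard.symm
          _ ≤ ((F₀ • (S : Set X)) ∩ B₀).ncard := hG S hSsub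
          _ = (s.biUnion t).card := by rw [heq, Set.ncard_coe_finset]
      obtain ⟨f0, hf0inj, hf0mem⟩ := (Finset.all_card_le_biUnion_card_iff_exists_injective t).1 hHallA
      refine ⟨f0, hf0inj, fun a => ?_⟩
      have := hf0mem a
      rw [Set.Finite.mem_toFinset] at this
      obtain ⟨⟨g, hg, x, hx, hgx⟩, hB⟩ := this
      rcases hx with rfl
      exact ⟨g, hg, hgx, hB⟩
    obtain ⟨f0, hf0inj, hf0⟩ := key A B (F : Set G) F.finite_toSet
      (fun g x hx => egdcmp_core_inv X' g hx) hGA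
    obtain ⟨g0, hg0inj, hg0⟩ := key B A ((F : Set G)⁻¹) F.finite_toSet.inv
      (fun g x hx => egdcmp_core_inv X' g hx) hGB
    -- upgrade to subtype maps
    have hf0C : ∀ a : {x // x ∈ A ∩ C}, f0 a ∈ B ∩ C := by
      intro a
      obtain ⟨g, hg, hgx, hB⟩ := hf0 a
      exact ⟨hB, hgx ▸ egdcmp_core_inv X' g a.2.2⟩
    have hg0C : ∀ b : {x // x ∈ B ∩ C}, g0 b ∈ A ∩ C := by
      intro b
      obtain ⟨g, hg, hgx, hA⟩ := hg0 b
      exact ⟨hA, hgx ▸ egdcmp_core_inv X' g b.2.2⟩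
    set fAB : {x // x ∈ A ∩ C} → {x // x ∈ B ∩ C} := fun a => ⟨f0 a, hf0C a⟩ with hfAB
    set gBA : {x // x ∈ B ∩ C} → {x // x ∈ A ∩ C} := fun b => ⟨g0 b, hg0C b⟩ with hgBA
    have hfABinj : Function.Injective fAB := fun a1 a2 h => hf0inj (congrArg Subtype.val h)
    have hgBAinj : Function.Injective gBA := fun b1 b2 h => hg0inj (congrArg Subtype.val h)
    obtain ⟨h, ⟨hinj, hsurj⟩, halt⟩ := egdcmp_csb hfABinj hgBAinj
    have hmatch : ∀ a : {x // x ∈ A ∩ C}, ∃ g ∈ F, (h a : X) = g • (a : X) := by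
      intro a
      rcases halt a with hcase | hcase
      · obtain ⟨g, hg, hgx, _⟩ := hf0 a
        refine ⟨g, hg, ?_⟩
        rw [hcase]
        exact hgx.symm
      · obtain ⟨g, hg, hgx, _⟩ := hg0 (h a)
        have hval : g0 (h a) = (a : X) := congrArg Subtype.val hcase
        refine ⟨g⁻¹, Set.mem_inv.1 hg, ?_⟩
        rw [← hval, ← hgx, inv_smul_smul]
    choose cg hcgF hcg using hmatch
    set e := F.equivFin with he
    refine ⟨F.card,
      fun i => {x | ∃ hx : x ∈ A ∩ C, e ⟨cg ⟨x, hx⟩, hcgF ⟨x, hx⟩⟩ = i},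
      fun i => ((e.symm i : { g // g ∈ F }) : G), C, egdcmp_core_null μ hmp hX', ⟨?_, ?_⟩, ⟨?_, ?_⟩⟩
    · ext x
      constructor
      · rintro ⟨s, ⟨i, rfl⟩, ⟨hx, _⟩, _⟩
        exact hx
      · intro hx
        exact Set.mem_iUnion.2 ⟨e ⟨cg ⟨x, hx⟩, hcgF ⟨x, hx⟩⟩, ⟨hx, rfl⟩, hx.2⟩
    · intro i j hij
      rw [Function.onFun]
      rw [Set.disjoint_left]
      rintro x ⟨⟨hx, hi⟩, -⟩ ⟨⟨hx', hj⟩, -⟩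
      exact hij (hi.symm.trans hj)
    · ext y
      constructor
      · rintro ⟨s, ⟨i, rfl⟩, ⟨⟨x, ⟨hx, hi⟩, rfl⟩, hyC⟩⟩
        have hei : ((e.symm i : { g // g ∈ F }) : G) = cg ⟨x, hx⟩ := by
          rw [← hi, Equiv.symm_apply_apply]
        show ((e.symm i : { g // g ∈ F }) : G) • x ∈ B ∩ C
        rw [hei, ← hcg ⟨x, hx⟩]
        exact (h ⟨x, hx⟩).2
      · intro hy
        obtain ⟨a, ha⟩ := hsurj ⟨y, hy⟩
        refine Set.mem_iUnion.2 ⟨e ⟨cg a, hcgF a⟩, ⟨?_, hy.2⟩⟩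
        refine Set.mem_smul_set.2 ⟨(a : X), ⟨a.2, rfl⟩, ?_⟩
        have hei : ((e.symm (e ⟨cg a, hcgF a⟩) : { g // g ∈ F }) : G) = cg a := by
          rw [Equiv.symm_apply_apply]
        show ((e.symm (e ⟨cg a, hcgF a⟩) : { g // g ∈ F }) : G) • (a : X) = y
        rw [hei, ← hcg a, ha]
    · intro i j hij
      rw [Function.onFun]
      rw [Set.disjoint_left]
      rintro y ⟨⟨x, ⟨hx, hi⟩, rfl⟩, -⟩ ⟨⟨x', ⟨hx', hj⟩, hx'eq⟩, -⟩
      have hei : ((e.symm i : { g // g ∈ F }) : G) = cg ⟨x, hx⟩ := by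
        rw [← hi, Equiv.symm_apply_apply]
      have hej : ((e.symm j : { g // g ∈ F }) : G) = cg ⟨x', hx'⟩ := by
        rw [← hj, Equiv.symm_apply_apply]
      have hvals : (h ⟨x', hx'⟩ : X) = (h ⟨x, hx⟩ : X) := by
        rw [hcg ⟨x, hx⟩, hcg ⟨x', hx'⟩, ← hei, ← hej]
        exact hx'eq
      have : (⟨x', hx'⟩ : {z // z ∈ A ∩ C}) = ⟨x, hx⟩ := hinj (Subtype.ext hvals)
      have hxx : x' = x := congrArg Subtype.val this
      subst hxx
      exact hij (hi.symm.trans hj)
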